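/- With d_f as above, the 'four-point inequality' holds: for all s,t,u,v ∈ [0,m], d_f(s,t) + d_f(u,v) ≤ max( d_f(s,u) + d_f(t,v), d_f(s,v) + d_f(t,u) ). Consequently the quotient metric space ([0,m]/∼_f, d_f) is 0-hyperbolic. -/
import Mathlib


open Set

/-- `m_f(s,t) = inf_{r ∈ [min s t, max s t]} f(r)`. -/
noncomputable def treeMinf (f : ℝ → ℝ) (s t : ℝ) : ℝ :=
  sInf (f '' Icc (min s t) (max s t))

/-- `d_f(s,t) = f(s) + f(t) - 2 m_f(s,t)`. -/
noncomputable def treeDist (f : ℝ → ℝ) (s t : ℝ) : ℝ :=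
  f s + f t - 2 * treeMinf f s t

lemma treeMinf_symm (f : ℝ → ℝ) (s t : ℝ) : treeMinf f s t = treeMinf f t s := by
  unfold treeMinf
  rw [min_comm, max_comm]

section Aux

variable {f : ℝ → ℝ} {m : ℝ}
variable (hattain : ∀ a b : ℝ, 0 ≤ a → a ≤ b → b ≤ m →
      ∃ r ∈ Icc a b, ∀ x ∈ Icc a b, f r ≤ f x)

include hattain

lemma treeMinf_spec {a b : ℝ} (h0 : 0 ≤ a) (hab : a ≤ b) (hbm : b ≤ m) :
    ∃ r ∈ Icc a b, treeMinf f a b = f r ∧ ∀ x ∈ Icc a b, f r ≤ f x := by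
  obtain ⟨r, hr, hmin⟩ := hattain a b h0 hab hbm
  refine ⟨r, hr, ?_, hmin⟩
  have he : treeMinf f a b = sInf (f '' Icc a b) := by
    unfold treeMinf; rw [min_eq_left hab, max_eq_right hab]
  rw [he]
  apply le_antisymm
  · exact csInf_le ⟨f r, by rintro _ ⟨x, hx, rfl⟩; exact hmin x hx⟩ ⟨r, hr, rfl⟩
  · exact le_csInf ⟨f r, r, hr, rfl⟩ (by rintro _ ⟨x, hx, rfl⟩; exact hmin x hx)

lemma treeMinf_mono {a b a' b' : ℝ} (h0 : 0 ≤ a') (h1 : a' ≤ a) (h2 : a ≤ b)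
    (h3 : b ≤ b') (h4 : b' ≤ m) : treeMinf f a' b' ≤ treeMinf f a b := by
  obtain ⟨r, hr, he, hmin⟩ := treeMinf_spec hattain h0 (h1.trans (h2.trans h3)) h4
  obtain ⟨r', hr', he', _⟩ := treeMinf_spec hattain (h0.trans h1) h2 (h3.trans h4)
  rw [he, he']
  exact hmin r' ⟨h1.trans hr'.1, hr'.2.trans h3⟩

lemma treeMinf_hinge {a b c : ℝ} (h0 : 0 ≤ a) (h1 : a ≤ b) (h2 : b ≤ c) (h3 : c ≤ m) :
    treeMinf f a c = min (treeMinf f a b) (treeMinf f b c) := by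
  apply le_antisymm
  · exact le_min (treeMinf_mono hattain h0 le_rfl h1 h2 h3)
      (treeMinf_mono hattain h0 h1 h2 le_rfl h3)
  · obtain ⟨r, hr, he, _⟩ := treeMinf_spec hattain h0 (h1.trans h2) h3
    rcases le_total r b with hrb | hrb
    · obtain ⟨r', hr', he', hmin'⟩ := treeMinf_spec hattain h0 h1 (h2.trans h3)
      refine (min_le_left _ _).trans ?_
      rw [he, he']; exact hmin' r ⟨hr.1, hrb⟩
    · obtain ⟨r', hr', he', hmin'⟩ := treeMinf_spec hattain (h0.trans h1) h2 h3
      refine (min_le_right _ _).trans ?_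
      rw [he, he']; exact hmin' r ⟨hrb, hr.2⟩

lemma treeKeyA {s t u v : ℝ} (hs : 0 ≤ s) (htm : t ≤ m) (hvm : v ≤ m)
    (hst : s ≤ t) (huv : u ≤ v) (hsu : s ≤ u) :
    min (treeMinf f s u + treeMinf f t v) (treeMinf f s v + treeMinf f t u)
      ≤ treeMinf f s t + treeMinf f u v := by
  rcases le_total t u with htu | hut
  · -- disjoint: s ≤ t ≤ u ≤ v
    have h1 : treeMinf f s u ≤ treeMinf f s t :=
      treeMinf_mono hattain hs le_rfl hst htu (huv.trans hvm)
    have h2 : treeMinf f t v ≤ treeMinf f u v :=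
      treeMinf_mono hattain (hs.trans hst) htu huv le_rfl hvm
    exact (min_le_left _ _).trans (add_le_add h1 h2)
  · rcases le_total t v with htv | hvt
    · -- overlap: s ≤ u ≤ t ≤ v
      have e1 : treeMinf f s t = min (treeMinf f s u) (treeMinf f u t) :=
        treeMinf_hinge hattain hs hsu hut htm
      have e2 : treeMinf f u v = min (treeMinf f u t) (treeMinf f t v) :=
        treeMinf_hinge hattain (hs.trans hsu) hut htv hvm
      have e3 : treeMinf f s v = min (treeMinf f s t) (treeMinf f t v) :=
        treeMinf_hinge hattain hs hst htv hvm
      have e4 : treeMinf f t u = treeMinf f u t := treeMinf_symm f t u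
      rw [e3, e4, e1, e2]
      set A := treeMinf f s u
      set B := treeMinf f u t
      set C := treeMinf f t v
      rcases le_total A B with h|h <;> rcases le_total B C with h'|h' <;>
        rcases le_total A C with h''|h'' <;> simp only [min_def] <;> split_ifs <;> linarith
    · -- nested: s ≤ u ≤ v ≤ t
      have e1 : treeMinf f u t = min (treeMinf f u v) (treeMinf f v t) :=
        treeMinf_hinge hattain (hs.trans hsu) huv hvt htm
      have e2 : treeMinf f s t = min (treeMinf f s u) (treeMinf f u t) :=
        treeMinf_hinge hattain hs hsu (huv.trans hvt) htm
      have e3 : treeMinf f t v = treeMinf f v t := treeMinf_symm f t v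
      have e4 : treeMinf f s v = min (treeMinf f s u) (treeMinf f u v) :=
        treeMinf_hinge hattain hs hsu huv (hvt.trans htm)
      have e5 : treeMinf f t u = treeMinf f u t := treeMinf_symm f t u
      rw [e2, e3, e4, e5, e1]
      set A := treeMinf f s u
      set B := treeMinf f u v
      set C := treeMinf f v t
      rcases le_total A B with h|h <;> rcases le_total B C with h'|h' <;>
        rcases le_total A C with h''|h'' <;> simp only [min_def] <;> split_ifs <;> linarith

lemma treeKeyB {s t u v : ℝ} (hs : s ∈ Icc 0 m) (ht : t ∈ Icc 0 m)
    (hu : u ∈ Icc 0 m) (hv : v ∈ Icc 0 m) (hst : s ≤ t) (huv : u ≤ v) :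
    min (treeMinf f s u + treeMinf f t v) (treeMinf f s v + treeMinf f t u)
      ≤ treeMinf f s t + treeMinf f u v := by
  rcases le_total s u with hsu | hus
  · exact treeKeyA hattain hs.1 ht.2 hv.2 hst huv hsu
  · have h := treeKeyA hattain hu.1 hv.2 ht.2 huv hst hus
    rw [treeMinf_symm f u s, treeMinf_symm f v t, treeMinf_symm f u t,
      treeMinf_symm f v s, add_comm (treeMinf f t u)] at h
    linarith [h]

lemma treeKeyC {s t u v : ℝ} (hs : s ∈ Icc 0 m) (ht : t ∈ Icc 0 m)
    (hu : u ∈ Icc 0 m) (hv : v ∈ Icc 0 m) :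
    min (treeMinf f s u + treeMinf f t v) (treeMinf f s v + treeMinf f t u)
      ≤ treeMinf f s t + treeMinf f u v := by
  rcases le_total s t with h1 | h1 <;> rcases le_total u v with h2 | h2
  · exact treeKeyB hattain hs ht hu hv h1 h2
  · have h := treeKeyB hattain hs ht hv hu h1 h2
    rw [treeMinf_symm f v u, min_comm] at h
    exact h
  · have h := treeKeyB hattain ht hs hu hv h1 h2
    rw [treeMinf_symm f t s, add_comm (treeMinf f t u), add_comm (treeMinf f t v),
      min_comm] at h
    exact h
  · have h := treeKeyB hattain ht hs hv hu h1 h2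
    rw [treeMinf_symm f t s, treeMinf_symm f v u, add_comm (treeMinf f t v),
      add_comm (treeMinf f t u)] at h
    exact h

end Aux

/-- The four-point inequality for `d_f`: for all `s,t,u,v ∈ [0,m]`,
`d_f(s,t) + d_f(u,v) ≤ max (d_f(s,u) + d_f(t,v)) (d_f(s,v) + d_f(t,u))`,
i.e. the (quotient by `d_f = 0` of the) pseudometric space `([0,m], d_f)` is 0-hyperbolic. -/
theorem treeDist_four_point (f : ℝ → ℝ) (m : ℝ) (hm : 0 ≤ m)
    (hpos : ∀ x ∈ Icc 0 m, 0 ≤ f x) (hfm : f m = 0)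
    (hattain : ∀ a b : ℝ, 0 ≤ a → a ≤ b → b ≤ m →
      ∃ r ∈ Icc a b, ∀ x ∈ Icc a b, f r ≤ f x) :
    ∀ s ∈ Icc 0 m, ∀ t ∈ Icc 0 m, ∀ u ∈ Icc 0 m, ∀ v ∈ Icc 0 m,
      treeDist f s t + treeDist f u v ≤
        max (treeDist f s u + treeDist f t v) (treeDist f s v + treeDist f t u) := by
  intro s hs t ht u hu v hv
  have hkey := treeKeyC hattain hs ht hu hv
  rcases le_total (treeMinf f s u + treeMinf f t v) (treeMinf f s v + treeMinf f t u)
    with h | h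
  · have h1 : treeMinf f s u + treeMinf f t v ≤ treeMinf f s t + treeMinf f u v := by
      rwa [min_eq_left h] at hkey
    refine le_trans ?_ (le_max_left _ _)
    simp only [treeDist]; linarith
  · have h1 : treeMinf f s v + treeMinf f t u ≤ treeMinf f s t + treeMinf f u v := by
      rwa [min_eq_right h] at hkey
    refine le_trans ?_ (le_max_right _ _)
    simp only [treeDist]; linarith
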